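/- arXiv:2201.10537 — 4 statements merged into one kernel-verified Lean document; each statement's English description precedes it below -/
import Mathlib

section
/- Let V be a finite vertex type and G a simple graph on V which is a tree (i.e. G is connected and acyclic). If f : G ≃g G is a graph automorphism of G such that f fixes every vertex of degree at most 1 (in particular every univalent vertex/leaf), then f is the identity automorphism. Consequently, any two automorphisms of a finite tree that agree on all vertices of degree at most 1 are equal. -/
open SimpleGraph Walk

section Aux

variable {V : Type*} {G : SimpleGraph V}

private lemma list_map_eq_self {α : Type*} {f : α → α} :
    ∀ (l : List α), l.map f = l → ∀ x ∈ l, f x = x := by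
  intro l
  induction l with
  | nil => intro _ x hx; simp at hx
  | cons a l ih =>
    intro h x hx
    simp only [List.map_cons, List.cons.injEq] at h
    rcases List.mem_cons.mp hx with rfl | hx
    · exact h.1
    · exact ih h.2 x hx

/-- In a path starting at `a`, if the edge `s(a,z)` occurs, then `z` is the second vertex. -/
private lemma snd_of_edge {a w z : V} (q : G.Walk a w) (hq : q.IsPath)
    (he : s(a, z) ∈ q.edges) : z = q.getVert 1 := by
  induction q with
  | nil => simp at he
  | @cons u b w h q' ih =>
    rw [Walk.edges_cons, List.mem_cons] at he
    rcases he with he | he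
    · rcases Sym2.eq_iff.mp he with ⟨-, rfl⟩ | ⟨rfl, rfl⟩
      · simp [Walk.getVert_cons_succ]
      · exact absurd rfl h.ne
    · exfalso
      have : u ∈ q'.support := q'.fst_mem_support_of_mem_edges he
      exact ((Walk.cons_isPath_iff h q').mp hq).2 this

/-- In an acyclic graph, a neighbor of the endpoint of a path which lies on the path
must be joined to the endpoint by an edge of the path. -/
private lemma edge_mem_of_adj_endpoint (hA : G.IsAcyclic) {x a z : V} (p : G.Walk x a)
    (hp : p.IsPath) (hz : G.Adj a z) (hzs : z ∈ p.support) : s(a, z) ∈ p.edges := by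
  classical
  have hz' : z ∈ p.reverse.support := by rwa [Walk.support_reverse, List.mem_reverse]
  set r := p.reverse.takeUntil z hz' with hr_def
  have hr : r.IsPath := hp.reverse.takeUntil hz'
  have hnc : ¬ (Walk.cons hz r.reverse).IsCycle := hA _
  rw [Walk.cons_isCycle_iff] at hnc
  push_neg at hnc
  have hmem : s(a, z) ∈ r.reverse.edges := hnc hr.reverse
  rw [Walk.edges_reverse, List.mem_reverse] at hmem
  have := p.reverse.edges_takeUntil_subset hz' hmem
  rwa [Walk.edges_reverse, List.mem_reverse] at this

/-- In an acyclic graph, if the endpoint of a path has at least two neighbors then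
one of them avoids the path. -/
private lemma exists_adj_notMem [Fintype V] [DecidableRel G.Adj] (hA : G.IsAcyclic)
    {x a : V} (p : G.Walk x a) (hp : p.IsPath) (hd2 : 2 ≤ G.degree a) :
    ∃ z, G.Adj a z ∧ z ∉ p.support := by
  rw [← G.card_neighborFinset_eq_degree] at hd2
  obtain ⟨z, hz, z', hz', hne⟩ := Finset.one_lt_card.mp hd2
  rw [SimpleGraph.mem_neighborFinset] at hz hz'
  by_contra hcon
  push_neg at hcon
  have key : ∀ y, G.Adj a y → y ∈ p.support → y = p.reverse.getVert 1 := by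
    intro y hy hys
    have he : s(a, y) ∈ p.edges := edge_mem_of_adj_endpoint hA p hp hy hys
    have he' : s(a, y) ∈ p.reverse.edges := by
      rwa [Walk.edges_reverse, List.mem_reverse]
    exact snd_of_edge p.reverse hp.reverse he'
  exact hne ((key z hz (hcon z hz)).trans (key z' hz' (hcon z' hz')).symm)

private lemma isPath_concat {x a z : V} {p : G.Walk x a} (hp : p.IsPath) (h : G.Adj a z)
    (hz : z ∉ p.support) : (p.concat h).IsPath := by
  rw [Walk.isPath_def, Walk.support_concat, List.nodup_append']
  exact ⟨hp.support_nodup, List.nodup_singleton z,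
    by simpa [List.disjoint_singleton] using hz⟩

private lemma getVert_concat' {x a z : V} (p : G.Walk x a) (h : G.Adj a z) {i : ℕ}
    (hi : i ≤ p.length) : (p.concat h).getVert i = p.getVert i := by
  rw [Walk.concat_eq_append, Walk.getVert_append]
  split_ifs with h'
  · rfl
  · have : i = p.length := le_antisymm hi (not_lt.mp h')
    subst this
    simp [Walk.getVert_length]

/-- Every path in a finite acyclic graph extends to a path ending at a vertex of
degree at most one. -/
private lemma exists_leaf_extension [Fintype V] [DecidableRel G.Adj] (hA : G.IsAcyclic) :
    ∀ (n : ℕ) {v a : V} (P : G.Walk v a), P.IsPath → Fintype.card V ≤ P.length + n + 1 →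
      ∃ (b : V) (Q : G.Walk v b), Q.IsPath ∧ G.degree b ≤ 1 ∧ P.length ≤ Q.length ∧
        ∀ i ≤ P.length, Q.getVert i = P.getVert i := by
  intro n
  induction n with
  | zero =>
    intro v a P hP hcard
    by_cases hd : G.degree a ≤ 1
    · exact ⟨a, P, hP, hd, le_rfl, fun i _ => rfl⟩
    · exfalso
      obtain ⟨z, hz, hzs⟩ := exists_adj_notMem hA P hP (by omega)
      have hP' : (P.concat hz).IsPath := isPath_concat hP hz hzs
      have hlen : (P.concat hz).support.length ≤ Fintype.card V :=
        hP'.support_nodup.length_le_card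
      rw [Walk.length_support, Walk.length_concat] at hlen
      omega
  | succ m ih =>
    intro v a P hP hcard
    by_cases hd : G.degree a ≤ 1
    · exact ⟨a, P, hP, hd, le_rfl, fun i _ => rfl⟩
    · obtain ⟨z, hz, hzs⟩ := exists_adj_notMem hA P hP (by omega)
      have hP' : (P.concat hz).IsPath := isPath_concat hP hz hzs
      obtain ⟨b, Q, hQ, hdb, hlen, hvert⟩ := ih (P.concat hz) hP'
        (by rw [Walk.length_concat]; omega)
      refine ⟨b, Q, hQ, hdb, ?_, ?_⟩
      · rw [Walk.length_concat] at hlen; omega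
      · intro i hi
        rw [hvert i (by rw [Walk.length_concat]; omega), getVert_concat' P hz hi]

/-- An automorphism fixing the endpoints of a path in a tree fixes the whole path. -/
private lemma fix_support (hT : G.IsTree) (f : G ≃g G) {a b : V} (ha : f a = a)
    (hb : f b = b) (p : G.Walk a b) (hp : p.IsPath) : ∀ w ∈ p.support, f w = w := by
  have hq : ((p.map f.toHom).copy ha hb).IsPath := by
    rw [Walk.isPath_copy]
    exact Walk.map_isPath_of_injective f.injective hp
  have huniq := hT.existsUnique_path a b
  obtain ⟨r, -, hru⟩ := huniq
  have h1 : p = r := hru p hp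
  have h2 : (p.map f.toHom).copy ha hb = r := hru _ hq
  have hsupp : p.support.map f = p.support := by
    conv_rhs => rw [h1, ← h2]
    rw [Walk.support_copy, Walk.support_map]
    rfl
  exact list_map_eq_self p.support hsupp

end Aux

/-- A tree automorphism fixing all vertices of degree at most one (in particular all
univalent vertices/leaves) is the identity; consequently any two automorphisms of a
finite tree agreeing on all vertices of degree at most one are equal. -/
theorem tree_automorphism_fixing_leaves_is_id
    {V : Type*} [Fintype V] (G : SimpleGraph V) [DecidableRel G.Adj]
    (hT : G.IsTree) :
    (∀ f : G ≃g G, (∀ v : V, G.degree v ≤ 1 → f v = v) → ∀ v : V, f v = v) ∧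
    (∀ f g : G ≃g G, (∀ v : V, G.degree v ≤ 1 → f v = g v) → f = g) := by
  classical
  have hA : G.IsAcyclic := hT.2
  have main : ∀ f : G ≃g G, (∀ v : V, G.degree v ≤ 1 → f v = v) → ∀ v : V, f v = v := by
    intro f hf v
    by_cases hd : G.degree v ≤ 1
    · exact hf v hd
    · -- v has two distinct neighbors x and y
      rw [not_le, ← G.card_neighborFinset_eq_degree, Finset.one_lt_card] at hd
      obtain ⟨x, hx, y, hy, hxy⟩ := hd
      rw [SimpleGraph.mem_neighborFinset] at hx hy
      -- build leaf paths starting with x and with y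
      have build : ∀ z : V, G.Adj v z → ∃ (b : V) (Q : G.Walk v b),
          Q.IsPath ∧ G.degree b ≤ 1 ∧ 1 ≤ Q.length ∧ Q.getVert 1 = z := by
        intro z hz
        have hP0 : (Walk.cons hz (Walk.nil : G.Walk z z)).IsPath := by
          rw [Walk.cons_isPath_iff]
          exact ⟨Walk.IsPath.nil, by simp [hz.ne]⟩
        obtain ⟨b, Q, hQ, hdb, hlen, hvert⟩ := exists_leaf_extension hA (Fintype.card V)
          (Walk.cons hz (Walk.nil : G.Walk z z)) hP0 (by simp; omega)
        refine ⟨b, Q, hQ, hdb, by simpa using hlen, ?_⟩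
        have := hvert 1 (by simp)
        simpa using this
      obtain ⟨b₁, Q, hQ, hd1, hQlen, hQ1⟩ := build x hx
      obtain ⟨b₂, R, hR, hd2, hRlen, hR1⟩ := build y hy
      -- supports of Q and R meet only at v
      have hinter : ∀ w, w ∈ Q.support → w ∈ R.support → w = v := by
        intro w hwQ hwR
        by_contra hwv
        have hgv : ∀ (b : V) (S : G.Walk v b), S.IsPath → (hw : w ∈ S.support) →
            (S.takeUntil w hw).getVert 1 = S.getVert 1 := by
          intro b S hS hw
          have hspec := S.take_spec hw
          have hlen1 : 1 ≤ (S.takeUntil w hw).length := by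
            by_contra hl
            have : (S.takeUntil w hw).length = 0 := by omega
            have := Walk.eq_of_length_eq_zero this
            exact hwv this.symm
          conv_rhs => rw [← hspec]
          rw [Walk.getVert_append]
          split_ifs with hlt
          · rfl
          · have hlen_eq : (S.takeUntil w hw).length = 1 := by omega
            have hv1 : (S.takeUntil w hw).getVert 1 = w := by
              rw [← hlen_eq]; exact Walk.getVert_length _
            rw [hv1, hlen_eq]
            simp
        have hq1 : (Q.takeUntil w hwQ).getVert 1 = x := by rw [hgv _ Q hQ hwQ, hQ1]
        have hr1 : (R.takeUntil w hwR).getVert 1 = y := by rw [hgv _ R hR hwR, hR1]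
        have hpu := isAcyclic_iff_path_unique.mp hA
          (⟨Q.takeUntil w hwQ, hQ.takeUntil hwQ⟩ : G.Path v w)
          (⟨R.takeUntil w hwR, hR.takeUntil hwR⟩ : G.Path v w)
        have : Q.takeUntil w hwQ = R.takeUntil w hwR := congrArg Subtype.val hpu
        rw [this, hr1] at hq1
        exact hxy hq1.symm
      -- the concatenated walk from b₁ to b₂ through v is a path
      set W : G.Walk b₁ b₂ := Q.reverse.append R with hW_def
      have hWpath : W.IsPath := by
        rw [Walk.isPath_def, Walk.support_append, List.nodup_append']
        refine ⟨hQ.reverse.support_nodup, ?_, ?_⟩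
        · have := hR.support_nodup
          exact this.sublist (List.tail_sublist _)
        · intro w hw1 hw2
          have hwQ : w ∈ Q.support := by
            rwa [Walk.support_reverse, List.mem_reverse] at hw1
          have hwR : w ∈ R.support := List.mem_of_mem_tail hw2
          have hwv : w = v := hinter w hwQ hwR
          subst hwv
          have : w ∉ R.support.tail := by
            have hnd := hR.support_nodup
            rw [R.support_eq_cons, List.nodup_cons] at hnd
            exact hnd.1
          exact this hw2
      have hvW : v ∈ W.support := by
        rw [hW_def, Walk.mem_support_append_iff]
        left
        rw [Walk.support_reverse, List.mem_reverse]
        exact Q.start_mem_support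
      exact fix_support hT f (hf b₁ hd1) (hf b₂ hd2) W hWpath v hvW
  refine ⟨main, ?_⟩
  intro f g hfg
  have hcomp := main (f.trans g.symm) (fun v hv => by
    show g.symm (f v) = v
    rw [hfg v hv]
    exact g.symm_apply_apply v)
  refine RelIso.ext fun v => ?_
  have h2 : g.symm (f v) = v := hcomp v
  calc f v = g (g.symm (f v)) := (g.apply_symm_apply _).symm
    _ = g v := by rw [h2]
end

section
/- Let G be a connected simple graph on a finite vertex type. Then any two spanning trees of G are connected by a finite sequence of mutations: there is a chain of spanning trees from the first to the second in which consecutive trees are adjacent, where two spanning trees are adjacent if they share all but one edge (equivalently, each of the two edge-set differences T₁.edgeSet \ T₂.edgeSet and T₂.edgeSet \ T₁.edgeSet contains exactly one edge). In other words, the spanning tree graph 𝒯(G) of a connected graph G is connected. -/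
set_option maxHeartbeats 1000000


/-- Two spanning trees of a graph are *adjacent* (related by a mutation) if they share
all but one edge, i.e. each of the two edge-set differences contains exactly one edge. -/
def SpanningTreeAdjacent {V : Type*} {G : SimpleGraph V} (T₁ T₂ : G.Subgraph) : Prop :=
  (T₁.edgeSet \ T₂.edgeSet).ncard = 1 ∧ (T₂.edgeSet \ T₁.edgeSet).ncard = 1

open SimpleGraph

section Aux

variable {V : Type*}

/-- If the endpoints of an edge remain reachable after deleting it, then reachability in the
original graph implies reachability in the edge-deleted graph. -/
private lemma reach_del {G : SimpleGraph V} {a b x y : V}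
    (hab : (G \ fromEdgeSet {s(a, b)}).Reachable a b) (h : G.Reachable x y) :
    (G \ fromEdgeSet {s(a, b)}).Reachable x y := by
  obtain ⟨p⟩ := h
  induction p with
  | nil => exact Reachable.refl _
  | @cons x' z y' h' q ih =>
    refine Reachable.trans ?_ ih
    by_cases hxz : s(x', z) = s(a, b)
    · rw [Sym2.eq_iff] at hxz
      rcases hxz with ⟨rfl, rfl⟩ | ⟨rfl, rfl⟩
      · exact hab
      · exact hab.symm
    · refine Adj.reachable ?_
      rw [sdiff_adj]
      refine ⟨h', ?_⟩
      rw [fromEdgeSet_adj]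
      rintro ⟨hmem, -⟩
      exact hxz (Set.mem_singleton_iff.mp hmem)

/-- The edge-exchange lemma for spanning trees: given trees `H₁ ≤ G` and `H₂`, and an
edge `f` of `H₂` not in `H₁`, there is an edge `e` of `H₁` not in `H₂` such that
`H₁ + f - e` is again a tree contained in `G`. -/
private lemma exchange {G H₁ H₂ : SimpleGraph V} (h₁G : H₁ ≤ G)
    (h₁ : H₁.IsTree) (h₂ : H₂.IsTree) {f : Sym2 V}
    (hf₂ : f ∈ H₂.edgeSet) (hf₁ : f ∉ H₁.edgeSet) (hfG : f ∈ G.edgeSet) :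
    ∃ (H' : SimpleGraph V) (e : Sym2 V), H' ≤ G ∧ H'.IsTree ∧
      e ∈ H₁.edgeSet ∧ e ∉ H₂.edgeSet ∧
      H'.edgeSet = insert f H₁.edgeSet \ {e} := by
  classical
  revert hf₂ hf₁ hfG
  induction f using Sym2.ind with
  | _ u v =>
  intro hf₂ hf₁ hfG
  have huv : H₂.Adj u v := (mem_edgeSet H₂).mp hf₂
  have hne : u ≠ v := huv.ne
  obtain ⟨p, hp, hup⟩ := h₁.existsUnique_path u v
  have hpf : s(u, v) ∉ p.edges := fun h => hf₁ (p.edges_subset_edgeSet h)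
  -- find an edge of `p` not in `H₂`
  have hex : ∃ e ∈ p.edges, e ∉ H₂.edgeSet := by
    by_contra hcon
    push_neg at hcon
    set p' : H₂.Walk u v := p.transfer H₂ hcon with hp'def
    have hcyc : (SimpleGraph.Walk.cons huv.symm p').IsCycle := by
      rw [Walk.cons_isCycle_iff]
      refine ⟨hp.transfer _, ?_⟩
      rw [hp'def, Walk.edges_transfer, Sym2.eq_swap]
      exact hpf
    exact h₂.IsAcyclic _ hcyc
  obtain ⟨e, hep, he₂⟩ := hex
  revert hep he₂
  induction e using Sym2.ind with
  | _ a b =>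
  intro hep he₂
  have he₁ : s(a, b) ∈ H₁.edgeSet := p.edges_subset_edgeSet hep
  have hef : s(a, b) ≠ s(u, v) := fun h => hf₁ (h ▸ he₁)
  -- the augmented graph K and the exchanged graph H'
  set K : SimpleGraph V := H₁ ⊔ fromEdgeSet {s(u, v)} with hKdef
  have hKG : K ≤ G := by
    refine sup_le h₁G ?_
    intro x y hxy
    rw [fromEdgeSet_adj, Set.mem_singleton_iff] at hxy
    rw [← mem_edgeSet, hxy.1]
    exact hfG
  have hK : K.Connected := h₁.isConnected.mono le_sup_left
  have hEK : K.edgeSet = insert s(u, v) H₁.edgeSet := by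
    rw [hKdef, edgeSet_sup, edgeSet_fromEdgeSet]
    ext x
    simp only [Set.mem_union, Set.mem_diff, Set.mem_singleton_iff, Set.mem_setOf_eq,
      Set.mem_insert_iff]
    constructor
    · rintro (h | ⟨rfl, -⟩)
      · exact Or.inr h
      · exact Or.inl rfl
    · rintro (rfl | h)
      · exact Or.inr ⟨rfl, by simp [hne]⟩
      · exact Or.inl h
  have hH₁K : H₁ ≤ K := le_sup_left
  -- a cycle in K through both s(u,v) and s(a,b)
  set pK : K.Walk u v := p.transfer K (fun x hx => (edgeSet_mono hH₁K) (p.edges_subset_edgeSet hx))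
    with hpKdef
  have hadjK : K.Adj v u := by
    refine Or.inr ?_
    rw [fromEdgeSet_adj, Set.mem_singleton_iff, Sym2.eq_swap]
    exact ⟨rfl, hne.symm⟩
  set c : K.Walk v v := SimpleGraph.Walk.cons hadjK pK with hcdef
  have hc : c.IsCycle := by
    rw [hcdef, Walk.cons_isCycle_iff]
    refine ⟨hp.transfer _, ?_⟩
    rw [hpKdef, Walk.edges_transfer, Sym2.eq_swap]
    exact hpf
  have hec : s(a, b) ∈ c.edges := by
    rw [hcdef, Walk.edges_cons]
    exact List.mem_cons_of_mem _ (by rw [hpKdef, Walk.edges_transfer]; exact hep)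
  set H' : SimpleGraph V := K \ fromEdgeSet {s(a, b)} with hH'def
  have hndiag : ¬ (s(a,b) : Sym2 V).IsDiag := (H₁.not_isDiag_of_mem_edgeSet he₁)
  have hE' : H'.edgeSet = insert s(u, v) H₁.edgeSet \ {s(a, b)} := by
    rw [hH'def, edgeSet_sdiff, edgeSet_fromEdgeSet, hEK]
    ext x
    simp only [Set.mem_diff, Set.mem_singleton_iff, Set.mem_setOf_eq]
    constructor
    · rintro ⟨h, h2⟩
      refine ⟨h, fun hx => h2 ⟨hx, hx ▸ hndiag⟩⟩
    · rintro ⟨h, h2⟩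
      exact ⟨h, fun hx => h2 hx.1⟩
  -- connectivity of H'
  have hreach : (K \ fromEdgeSet {s(a, b)}).Reachable a b :=
    (adj_and_reachable_delete_edges_iff_exists_cycle.mpr ⟨v, c, hc, hec⟩).2
  have hconn' : H'.Connected := by
    rw [connected_iff]
    exact ⟨fun x y => reach_del hreach (hK.preconnected x y), hK.nonempty⟩
  -- acyclicity of H'
  have hacyc : H'.IsAcyclic := by
    intro w d hd
    by_cases hfd : s(u, v) ∈ d.edges
    · have hreach2 : (H' \ fromEdgeSet {s(u, v)}).Reachable u v :=
        (adj_and_reachable_delete_edges_iff_exists_cycle.mpr ⟨w, d, hd, hfd⟩).2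
      obtain ⟨q⟩ := hreach2
      have hqE : ∀ x ∈ q.edges, x ∈ H₁.edgeSet ∧ x ≠ s(a, b) := by
        intro x hx
        have hx' := q.edges_subset_edgeSet hx
        rw [edgeSet_sdiff, edgeSet_fromEdgeSet, hE'] at hx'
        obtain ⟨⟨h1, h2⟩, h3⟩ := hx'
        rcases h1 with rfl | h1
        · exact absurd ⟨rfl, by simp [hne]⟩ h3
        · exact ⟨h1, fun h => h2 (Set.mem_singleton_iff.mpr h)⟩
      set q' : H₁.Walk u v := q.transfer H₁ (fun x hx => (hqE x hx).1) with hq'def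
      have hqp : (q'.toPath : H₁.Walk u v) = p := hup _ q'.toPath.prop
      have : s(a, b) ∈ q'.edges := by
        apply Walk.edges_toPath_subset q'
        rw [hqp]
        exact hep
      rw [hq'def, Walk.edges_transfer] at this
      exact (hqE _ this).2 rfl
    · have hdE : ∀ x ∈ d.edges, x ∈ H₁.edgeSet := by
        intro x hx
        have hx' := d.edges_subset_edgeSet hx
        rw [hE'] at hx'
        obtain ⟨h1, -⟩ := hx'
        rcases h1 with rfl | h1
        · exact absurd hx hfd
        · exact h1
      exact h₁.IsAcyclic _ (hd.transfer hdE)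
  exact ⟨H', s(a, b), le_trans sdiff_le hKG, ⟨hconn', hacyc⟩, he₁, he₂, hE'⟩

end Aux

/-- The spanning tree graph of a connected finite graph is connected: any two spanning
trees are connected by a finite sequence of mutations through spanning trees. -/
theorem spanning_tree_graph_connected
    {V : Type*} [Fintype V] (G : SimpleGraph V) (hG : G.Connected)
    (T₁ T₂ : G.Subgraph)
    (h₁s : T₁.IsSpanning) (h₁t : T₁.spanningCoe.IsTree)
    (h₂s : T₂.IsSpanning) (h₂t : T₂.spanningCoe.IsTree) :
    Relation.ReflTransGen
      (fun S₁ S₂ : {T : G.Subgraph // T.IsSpanning ∧ T.spanningCoe.IsTree} =>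
        SpanningTreeAdjacent S₁.1 S₂.1)
      ⟨T₁, h₁s, h₁t⟩ ⟨T₂, h₂s, h₂t⟩ := by
  classical
  have hfin : ∀ s : Set (Sym2 V), s.Finite := fun s => s.toFinite
  -- edge set of spanningCoe
  have esc : ∀ T : G.Subgraph, T.spanningCoe.edgeSet = T.edgeSet := by
    intro T
    ext e
    induction e using Sym2.ind with
    | _ u v => simp [Subgraph.mem_edgeSet]
  -- trees have the same number of edges
  have hcard : ∀ H : SimpleGraph V, H.IsTree → H.edgeSet.ncard + 1 = Fintype.card V := by
    intro H hH
    have : Fintype H.edgeSet := Fintype.ofFinite _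
    have h := hH.card_edgeFinset
    rwa [Set.ncard_eq_toFinset_card']
  have main : ∀ (k : ℕ) (T : G.Subgraph) (hs : T.IsSpanning) (ht : T.spanningCoe.IsTree),
      (T₂.edgeSet \ T.edgeSet).ncard = k →
      Relation.ReflTransGen
        (fun S₁ S₂ : {T : G.Subgraph // T.IsSpanning ∧ T.spanningCoe.IsTree} =>
          SpanningTreeAdjacent S₁.1 S₂.1)
        ⟨T, hs, ht⟩ ⟨T₂, h₂s, h₂t⟩ := by
    intro k
    induction k using Nat.strong_induction_on with
    | _ k ih =>
      intro T hs ht hk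
      rcases Nat.eq_zero_or_pos k with rfl | hkpos
      · -- base case : equal edge sets, hence equal subgraphs
        have hsub : T₂.edgeSet ⊆ T.edgeSet := by
          rw [← Set.diff_eq_empty]
          exact (Set.ncard_eq_zero (hfin _)).mp hk
        have hcards : T.edgeSet.ncard = T₂.edgeSet.ncard := by
          have h1 := hcard _ ht
          have h2 := hcard _ h₂t
          rw [esc] at h1 h2
          omega
        have heq : T₂.edgeSet = T.edgeSet :=
          Set.eq_of_subset_of_ncard_le hsub (le_of_eq hcards) (hfin _)
        have hTeq : T = T₂ := by
          apply SimpleGraph.Subgraph.ext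
          · rw [Set.eq_univ_of_forall hs, Set.eq_univ_of_forall h₂s]
          · ext x y
            rw [← Subgraph.mem_edgeSet, ← Subgraph.mem_edgeSet, heq]
        subst hTeq
        rfl
      · -- inductive step
        have hne : (T₂.edgeSet \ T.edgeSet).Nonempty := by
          rw [Set.nonempty_iff_ne_empty]
          intro h
          rw [h, Set.ncard_empty] at hk
          omega
        obtain ⟨f, hf₂, hf₁⟩ := hne
        have hf₂' : f ∈ T₂.spanningCoe.edgeSet := by rw [esc]; exact hf₂
        have hf₁' : f ∉ T.spanningCoe.edgeSet := by rw [esc]; exact hf₁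
        have hfG : f ∈ G.edgeSet := edgeSet_mono T₂.spanningCoe_le hf₂'
        obtain ⟨H', e, hle, htree, he₁, he₂, hE'⟩ :=
          exchange T.spanningCoe_le ht h₂t hf₂' hf₁' hfG
        have he₁' : e ∈ T.edgeSet := by rw [← esc]; exact he₁
        have he₂' : e ∉ T₂.edgeSet := by rw [← esc]; exact he₂
        have hef : e ≠ f := fun h => hf₁ (h ▸ he₁')
        set T' : G.Subgraph := SimpleGraph.toSubgraph H' hle with hT'def
        have hs' : T'.IsSpanning := SimpleGraph.toSubgraph.isSpanning H' hle
        have hscoe : T'.spanningCoe = H' := rfl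
        have ht' : T'.spanningCoe.IsTree := by rw [hscoe]; exact htree
        have hE'' : T'.edgeSet = insert f T.edgeSet \ {e} := by
          rw [← esc T', hscoe, hE', esc]
        -- adjacency of T and T'
        have hd1 : T.edgeSet \ T'.edgeSet = {e} := by
          rw [hE'']
          ext x
          simp only [Set.mem_diff, Set.mem_insert_iff, Set.mem_singleton_iff]
          constructor
          · rintro ⟨hx, h2⟩
            by_contra hxe
            exact h2 ⟨Or.inr hx, hxe⟩
          · rintro rfl
            exact ⟨he₁', fun h => h.2 rfl⟩
        have hd2 : T'.edgeSet \ T.edgeSet = {f} := by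
          rw [hE'']
          ext x
          simp only [Set.mem_diff, Set.mem_insert_iff, Set.mem_singleton_iff]
          constructor
          · rintro ⟨⟨h1, -⟩, h2⟩
            exact h1.resolve_right h2
          · rintro rfl
            exact ⟨⟨Or.inl rfl, fun h => hef h.symm⟩, hf₁⟩
        have hadj : SpanningTreeAdjacent T T' := by
          constructor
          · rw [hd1, Set.ncard_singleton]
          · rw [hd2, Set.ncard_singleton]
        -- the measure decreases
        have hmeas : T₂.edgeSet \ T'.edgeSet = (T₂.edgeSet \ T.edgeSet) \ {f} := by
          rw [hE'']
          ext x
          simp only [Set.mem_diff, Set.mem_insert_iff, Set.mem_singleton_iff]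
          constructor
          · rintro ⟨hx, h2⟩
            have hxe : x ≠ e := fun h => he₂' (h ▸ hx)
            have hxm : ¬(x = f ∨ x ∈ T.edgeSet) := fun hmem => h2 ⟨hmem, hxe⟩
            push_neg at hxm
            exact ⟨⟨hx, hxm.2⟩, hxm.1⟩
          · rintro ⟨⟨hx, hxE⟩, hxf⟩
            refine ⟨hx, ?_⟩
            rintro ⟨hmem, -⟩
            rcases hmem with rfl | hmem
            · exact hxf rfl
            · exact hxE hmem
        have hk' : (T₂.edgeSet \ T'.edgeSet).ncard = k - 1 := by
          rw [hmeas, Set.ncard_diff_singleton_of_mem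
            (show f ∈ T₂.edgeSet \ T.edgeSet from ⟨hf₂, hf₁⟩), hk]
        exact Relation.ReflTransGen.head hadj (ih (k - 1) (by omega) T' hs' ht' hk')
  exact main _ T₁ h₁s h₁t rfl
end

section
/- Letters outside a loop can be moved past it: for all lists A, B, C over L and every loop label t : β, the cyclic words A ++ [t⁺] ++ B ++ [t⁻] ++ C and A ++ C ++ [t⁺] ++ B ++ [t⁻] are mutation-equivalent, i.e. R (A ++ [t⁺] ++ B ++ [t⁻] ++ C) (A ++ C ++ [t⁺] ++ B ++ [t⁻]). -/
/-- One-step moves on cyclic words over the letter type `α ⊕ β × Bool`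
(`α` = outer letters, `β` = loop labels, `Sum.inr (t, true)` = `t⁺`,
`Sum.inr (t, false)` = `t⁻`): rotation and the basic mutation. -/
def MutStep (α β : Type*) : List (α ⊕ β × Bool) → List (α ⊕ β × Bool) → Prop :=
  fun w₁ w₂ =>
    (∃ (x : α ⊕ β × Bool) (w : List (α ⊕ β × Bool)), w₁ = x :: w ∧ w₂ = w ++ [x]) ∨
    (∃ (t : β) (A B C D : List (α ⊕ β × Bool)),
      w₁ = A ++ [Sum.inr (t, true)] ++ B ++ C ++ [Sum.inr (t, false)] ++ D ∧
      w₂ = D ++ [Sum.inr (t, true)] ++ C ++ B ++ [Sum.inr (t, false)] ++ A)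

/-- Mutation equivalence of cyclic words: the smallest equivalence relation
(reflexive–symmetric–transitive closure) containing the one-step moves. -/
def MutEquiv (α β : Type*) : List (α ⊕ β × Bool) → List (α ⊕ β × Bool) → Prop :=
  Relation.EqvGen (MutStep α β)

/-- Rotation: `u ++ v` is mutation-equivalent to `v ++ u`. -/
lemma mut_rotate {α β : Type*} (u v : List (α ⊕ β × Bool)) :
    MutEquiv α β (u ++ v) (v ++ u) := by
  induction u generalizing v with
  | nil => simpa [MutEquiv] using Relation.EqvGen.refl v
  | cons x u ih =>
    apply Relation.EqvGen.trans _ (u ++ (v ++ [x])) _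
    · apply Relation.EqvGen.rel
      left
      exact ⟨x, u ++ v, by simp, by simp⟩
    · have := ih (v ++ [x])
      simpa [MutEquiv] using this

/-- Letters outside a loop can be moved past it:
`(A t⁺ B t⁻ C)` is mutation-equivalent to `(A C t⁺ B t⁻)`. -/
theorem mut_move_outside_loop {α β : Type*} (A B C : List (α ⊕ β × Bool)) (t : β) :
    MutEquiv α β
      (A ++ [Sum.inr (t, true)] ++ B ++ [Sum.inr (t, false)] ++ C)
      (A ++ C ++ [Sum.inr (t, true)] ++ B ++ [Sum.inr (t, false)]) := by
  apply Relation.EqvGen.trans _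
    (C ++ [Sum.inr (t, true)] ++ B ++ [Sum.inr (t, false)] ++ A) _
  · apply Relation.EqvGen.rel
    right
    exact ⟨t, A, B, [], C, by simp, by simp⟩
  · apply Relation.EqvGen.symm
    have := mut_rotate (α := α) (β := β) A (C ++ [Sum.inr (t, true)] ++ B ++ [Sum.inr (t, false)])
    simpa [MutEquiv] using this
end

section
/- Construction of a symmetric Frobenius algebra from correlation-function data: let k be a field, V a finite-dimensional k-vector space, B : V →ₗ[k] V →ₗ[k] k a nondegenerate symmetric bilinear form, ε : V →ₗ[k] k a linear functional, and T : V →ₗ[k] V →ₗ[k] V →ₗ[k] k a trilinear form that is cyclically invariant (T a b c = T b c a for all a, b, c). Fix a basis (vᵢ) of V and its B-dual basis (v'ᵢ), characterized by B (vᵢ) (v'ⱼ) = δᵢⱼ. Assume the two compatibility equations: (E2) for all a, c: ∑ᵢ ε (vᵢ) * T (v'ᵢ) a c = B a c; and (E3) for all a, b, c, d: ∑ᵢ T a b (vᵢ) * T (v'ᵢ) c d = ∑ᵢ T b c (vᵢ) * T (v'ᵢ) d a. Then there exist a unique bilinear multiplication μ : V →ₗ[k] V →ₗ[k] V and a unique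 element u : V such that (V, μ, u) is a unital associative k-algebra, B (μ a b) c = T a b c for all a, b, c, ε a = B u a for all a, and B a b = ε (μ a b) for all a, b; in particular ε (μ a b) = ε (μ b a), so (V, μ, u, ε) is a symmetric Frobenius algebra. If moreover T is invariant under all permutations of its three arguments, then μ is commutative and (V, μ, u, ε) is a commutative Frobenius algebra. -/
open Finset

/-- Construction of a symmetric Frobenius algebra from correlation-function data:
given a nondegenerate symmetric pairing `B`, a trace `ε`, a cyclically invariant
three-point function `T`, a basis `v` with `B`-dual basis `v'`, and the two
compatibility equations (E2), (E3), there is a unique unital associative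
multiplication `μ` with unit `u` such that `B (μ a b) c = T a b c`,
`ε a = B u a` and `B a b = ε (μ a b)`; the resulting trace is symmetric
(`ε (μ a b) = ε (μ b a)`), and if `T` is fully symmetric then `μ` is commutative. -/
theorem frobenius_from_correlators
    {k : Type*} [Field k] {V : Type*} [AddCommGroup V] [Module k V]
    [FiniteDimensional k V]
    (B : V →ₗ[k] V →ₗ[k] k)
    (hBsymm : ∀ a b : V, B a b = B b a)
    (hBnd : ∀ a : V, (∀ b : V, B a b = 0) → a = 0)
    (ε : V →ₗ[k] k)
    (T : V →ₗ[k] V →ₗ[k] V →ₗ[k] k)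
    (hTcyc : ∀ a b c : V, T a b c = T b c a)
    {ι : Type*} [Fintype ι] [DecidableEq ι]
    (v v' : Module.Basis ι k V)
    (hdual : ∀ i j : ι, B (v i) (v' j) = if i = j then 1 else 0)
    (hE2 : ∀ a c : V, ∑ i, ε (v i) * T (v' i) a c = B a c)
    (hE3 : ∀ a b c d : V,
      ∑ i, T a b (v i) * T (v' i) c d = ∑ i, T b c (v i) * T (v' i) d a) :
    (∃! μu : (V →ₗ[k] V →ₗ[k] V) × V,
      (∀ a b c : V, μu.1 (μu.1 a b) c = μu.1 a (μu.1 b c)) ∧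
      (∀ a : V, μu.1 μu.2 a = a) ∧
      (∀ a : V, μu.1 a μu.2 = a) ∧
      (∀ a b c : V, B (μu.1 a b) c = T a b c) ∧
      (∀ a : V, ε a = B μu.2 a) ∧
      (∀ a b : V, B a b = ε (μu.1 a b))) ∧
    (∀ μ : V →ₗ[k] V →ₗ[k] V, (∀ a b c : V, B (μ a b) c = T a b c) →
      ∀ a b : V, ε (μ a b) = ε (μ b a)) ∧
    ((∀ a b c : V, T a b c = T b a c) →
      ∀ μ : V →ₗ[k] V →ₗ[k] V, (∀ a b c : V, B (μ a b) c = T a b c) →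
        ∀ a b : V, μ a b = μ b a) := by
  classical
  have hext : ∀ x y : V, (∀ c : V, B x c = B y c) → x = y := by
    intro x y h
    have h0 : x - y = 0 := hBnd (x - y) (fun b => by simp [map_sub, h b])
    exact sub_eq_zero.mp h0
  -- the multiplication
  set μ : V →ₗ[k] V →ₗ[k] V := LinearMap.mk₂ k
    (fun a b => ∑ i, T a b (v i) • v' i)
    (by intro a a' b; simp [add_smul, Finset.sum_add_distrib])
    (by intro r a b; simp [smul_smul, Finset.smul_sum])
    (by intro a b b'; simp [add_smul, Finset.sum_add_distrib])
    (by intro r a b; simp [smul_smul, Finset.smul_sum]) with hμdef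
  set u : V := ∑ i, ε (v i) • v' i with hudef
  have hμeq : ∀ a b : V, μ a b = ∑ i, T a b (v i) • v' i := fun a b => rfl
  have hBv' : ∀ (i j : ι), B (v' i) (v j) = if j = i then 1 else 0 := by
    intro i j; rw [hBsymm, hdual]
  -- B (μ a b) c = T a b c
  have hμ : ∀ a b c : V, B (μ a b) c = T a b c := by
    intro a b c
    have : B (μ a b) = T a b := by
      apply Module.Basis.ext v
      intro j
      rw [hμeq, map_sum, LinearMap.sum_apply]
      simp only [map_smul, LinearMap.smul_apply, smul_eq_mul, hBv']
      simp
    rw [this]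
  -- B u c = ε c
  have hu : ∀ c : V, B u c = ε c := by
    intro c
    have : B u = ε := by
      apply Module.Basis.ext v
      intro j
      rw [hudef, map_sum, LinearMap.sum_apply]
      simp only [map_smul, LinearMap.smul_apply, smul_eq_mul, hBv']
      simp
    rw [this]
  -- T u a b = B a b
  have hTu : ∀ a b : V, T u a b = B a b := by
    intro a b
    rw [hudef, map_sum, LinearMap.sum_apply, LinearMap.sum_apply]
    simp only [map_smul, LinearMap.smul_apply, smul_eq_mul]
    exact hE2 a b
  -- expansion of T (μ a b) c d
  have hTμ : ∀ a b c d : V, T (μ a b) c d = ∑ i, T a b (v i) * T (v' i) c d := by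
    intro a b c d
    rw [hμeq, map_sum, LinearMap.sum_apply, LinearMap.sum_apply]
    simp only [map_smul, LinearMap.smul_apply, smul_eq_mul]
  -- associativity
  have hassoc : ∀ a b c : V, μ (μ a b) c = μ a (μ b c) := by
    intro a b c
    apply hext
    intro d
    rw [hμ, hμ, hTcyc a (μ b c) d, hTμ, hTμ]
    exact hE3 a b c d
  -- left unit
  have hlu : ∀ a : V, μ u a = a := by
    intro a
    apply hext
    intro c
    rw [hμ, hTu]
  -- right unit
  have hru : ∀ a : V, μ a u = a := by
    intro a
    apply hext
    intro c
    rw [hμ, hTcyc a u c, hTu, hBsymm]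
  -- B a b = ε (μ a b)
  have htr : ∀ a b : V, B a b = ε (μ a b) := by
    intro a b
    rw [← hu (μ a b), hBsymm u, hμ, hTcyc a b u, hTcyc b u a, hTu]
  refine ⟨⟨(μ, u), ⟨hassoc, hlu, hru, hμ, fun a => (hu a).symm, htr⟩, ?_⟩, ?_, ?_⟩
  · rintro ⟨μ', u'⟩ ⟨-, -, -, hμ', hε', -⟩
    have hμμ : μ' = μ := by
      ext a b
      apply hext
      intro c
      rw [hμ' a b c, hμ a b c]
    have huu : u' = u := by
      apply hext
      intro c
      rw [hu c, ← hε' c]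
    exact Prod.ext hμμ huu
  · intro μ' hμ' a b
    have key : ∀ x y : V, ε (μ' x y) = B x y := by
      intro x y
      rw [← hu (μ' x y), hBsymm u, hμ', hTcyc x y u, hTcyc y u x, hTu]
    rw [key, key, hBsymm]
  · intro hTsymm μ' hμ' a b
    apply hext
    intro c
    rw [hμ', hμ', hTsymm]
end
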